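/- arXiv:1807.06867 — 3 statements merged into one kernel-verified Lean document; each statement's English description precedes it below -/
import Mathlib

section
/- Let G = (V,E) be a finite simple graph, let k ≥ 3 be an odd integer, let w : E → ℤ assign a positive integer weight to each edge, and let x̂ : E → ℝ satisfy 0 ≤ x̂(e) ≤ 1 for all e ∈ E and Σ_{e ∈ E(C)} x̂(e) ≥ 1 for every k-cycle C of G. Then there exists a k-cycle covering A ⊆ E of G with Σ_{e ∈ A} w(e) ≤ (k − 1/2) · Σ_{e ∈ E} w(e)·x̂(e). In particular, the minimum weight τ_k(G_w) of a k-cycle covering is at most (k − 1/2) times the optimal value of the fractional k-cycle covering LP. -/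
open Finset
open scoped Classical

lemma walk_parity {V : Type*} {G : SimpleGraph V} (f : V → Bool) :
    ∀ {a b : V} (p : G.Walk a b), (∀ e ∈ p.edges, ¬ (Sym2.map f e).IsDiag) →
      (f a = f b ↔ Even p.length) := by
  intro a b p
  induction p with
  | nil => simp
  | @cons u v c h p ih =>
    intro hyp
    have h1 : ¬ (Sym2.map f s(u, v)).IsDiag := hyp _ (by simp)
    have h2 := ih (fun e he => hyp e (by simp [he]))
    simp only [Sym2.map_pair_eq, Sym2.mk_isDiag_iff] at h1
    simp only [SimpleGraph.Walk.length_cons, Nat.even_add_one]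
    rw [← h2]
    cases hfu : f u <;> cases hfv : f v <;> cases hfc : f c <;> simp_all

lemma exists_cut {V : Type*} [Fintype V] [DecidableEq V] (H : Finset (Sym2 V)) (W : Sym2 V → ℝ)
    (hW : ∀ e ∈ H, 0 ≤ W e) (hnd : ∀ e ∈ H, ¬ e.IsDiag) :
    ∃ f : V → Bool, ∑ e ∈ H.filter (fun e => (Sym2.map f e).IsDiag), W e
      ≤ (∑ e ∈ H, W e) / 2 := by
  set S : (V → Bool) → ℝ := fun f => ∑ e ∈ H, (if (Sym2.map f e).IsDiag then W e else 0) with hS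
  set C : (V → Bool) → ℝ := fun f => ∑ e ∈ H, (if ¬ (Sym2.map f e).IsDiag then W e else 0) with hC
  have key : ∀ e ∈ H, ∑ f : V → Bool, (if (Sym2.map f e).IsDiag then W e else 0)
      = ∑ f : V → Bool, (if ¬ (Sym2.map f e).IsDiag then W e else 0) := by
    intro e he
    induction e using Sym2.ind with
    | _ u v =>
      have huv : u ≠ v := by
        intro h; exact hnd _ he (by simp [h])
      set σ : (V → Bool) → (V → Bool) := fun f => Function.update f u (!f u) with hσ
      have hinv : Function.Involutive σ := by
        intro f
        funext x
        by_cases hx : x = u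
        · subst hx; simp [hσ]
        · simp [hσ, Function.update_of_ne hx]
      refine (Fintype.sum_bijective σ hinv.bijective _ _ ?_).symm
      intro f
      have h1 : σ f u = !f u := by simp [hσ]
      have h2 : σ f v = f v := by simp [hσ, Function.update_of_ne (Ne.symm huv)]
      simp only [Sym2.map_pair_eq, Sym2.mk_isDiag_iff, h1, h2]
      cases f u <;> cases f v <;> simp
  have hsum : ∑ f : V → Bool, S f = ∑ f : V → Bool, C f := by
    rw [hS, hC]
    rw [Finset.sum_comm, Finset.sum_comm (s := Finset.univ)]
    exact Finset.sum_congr rfl key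
  have hex : ∃ f : V → Bool, S f ≤ C f := by
    by_contra hcon
    push_neg at hcon
    have : ∑ f : V → Bool, C f < ∑ f : V → Bool, S f :=
      Finset.sum_lt_sum_of_nonempty Finset.univ_nonempty (fun f _ => hcon f)
    linarith [hsum]
  obtain ⟨f, hf⟩ := hex
  refine ⟨f, ?_⟩
  have htot : S f + C f = ∑ e ∈ H, W e := by
    rw [hS, hC, ← Finset.sum_add_distrib]
    refine Finset.sum_congr rfl (fun e _ => ?_)
    by_cases hd : (Sym2.map f e).IsDiag <;> simp [hd]
  have hfil : ∑ e ∈ H.filter (fun e => (Sym2.map f e).IsDiag), W e = S f := by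
    rw [hS, Finset.sum_filter]
  rw [hfil]; linarith


/-- for odd `k ≥ 3`, from any fractional feasible solution `x̂` of the
k-cycle covering LP one obtains a k-cycle covering `A ⊆ E` of weight at most
`(k - 1/2) · Σ_{e ∈ E} w e * x̂ e`.  In particular the minimum weight of a k-cycle
covering is at most `k - 1/2` times the LP optimum. -/
theorem kCycleCover_odd_approx {V : Type*} [Fintype V] [DecidableEq V]
    (G : SimpleGraph V) [DecidableRel G.Adj]
    (k : ℕ) (hk : 3 ≤ k) (hodd : Odd k)
    (w : Sym2 V → ℤ) (hw : ∀ e ∈ G.edgeSet, 0 < w e)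
    (xh : Sym2 V → ℝ)
    (hx0 : ∀ e ∈ G.edgeSet, 0 ≤ xh e) (hx1 : ∀ e ∈ G.edgeSet, xh e ≤ 1)
    (hfeas : ∀ (u : V) (c : G.Walk u u), c.IsCycle → c.length = k →
      1 ≤ ∑ e ∈ c.edges.toFinset, xh e) :
    ∃ A : Finset (Sym2 V), ↑A ⊆ G.edgeSet ∧
      (∀ (u : V) (c : G.Walk u u), c.IsCycle → c.length = k →
        ∃ e ∈ c.edges, e ∈ A) ∧
      ∑ e ∈ A, (w e : ℝ) ≤
        ((k : ℝ) - 1 / 2) * ∑ e ∈ G.edgeFinset, (w e : ℝ) * xh e := by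
  have hk3 : (3:ℝ) ≤ (k:ℝ) := by exact_mod_cast hk
  set K : ℝ := 2 * (k:ℝ) - 1 with hKdef
  have hK5 : (5:ℝ) ≤ K := by simp only [hKdef]; linarith
  have hKpos : 0 < K := by linarith
  have hKne : K ≠ 0 := ne_of_gt hKpos
  clear_value K
  set A₁ : Finset (Sym2 V) := G.edgeFinset.filter (fun e => 2/K ≤ xh e) with hA₁def
  set H : Finset (Sym2 V) := G.edgeFinset.filter (fun e => 1/K ≤ xh e ∧ xh e < 2/K) with hHdef
  have hHE : ∀ e ∈ H, e ∈ G.edgeSet := by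
    intro e he
    exact SimpleGraph.mem_edgeFinset.1 (Finset.mem_of_mem_filter e he)
  obtain ⟨f, hcut⟩ := exists_cut H (fun e => (w e : ℝ))
    (fun e he => by show (0:ℝ) ≤ (w e : ℝ); exact_mod_cast (hw e (hHE e he)).le)
    (fun e he => (SimpleGraph.not_isDiag_of_mem_edgeSet G (hHE e he)))
  set A₂ : Finset (Sym2 V) := H.filter (fun e => (Sym2.map f e).IsDiag) with hA₂def
  refine ⟨A₁ ∪ A₂, ?_, ?_, ?_⟩
  · intro e he
    simp only [Finset.coe_union, Set.mem_union] at he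
    rcases he with he | he
    · exact SimpleGraph.mem_edgeFinset.1 (Finset.mem_of_mem_filter e he)
    · exact hHE e (Finset.mem_of_mem_filter e he)
  · -- covering
    intro u c hc hlen
    by_contra hcon
    push_neg at hcon
    have hedge : ∀ e ∈ c.edges, e ∈ G.edgeFinset := fun e he =>
      SimpleGraph.mem_edgeFinset.2 (c.edges_subset_edgeSet he)
    have hlt : ∀ e ∈ c.edges, xh e < 2/K := by
      intro e he
      by_contra hge
      push_neg at hge
      exact hcon e he (Finset.mem_union_left _ (Finset.mem_filter.2 ⟨hedge e he, hge⟩))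
    have hcard : c.edges.toFinset.card = k := by
      rw [List.toFinset_card_of_nodup hc.edges_nodup, SimpleGraph.Walk.length_edges, hlen]
    have hge : ∀ e ∈ c.edges, 1/K ≤ xh e := by
      intro e he
      have hmem : e ∈ c.edges.toFinset := List.mem_toFinset.2 he
      have h1 := hfeas u c hc hlen
      have hrest : ∑ e' ∈ c.edges.toFinset.erase e, xh e' ≤ ((k:ℝ) - 1) * (2/K) := by
        have hb := Finset.sum_le_card_nsmul (c.edges.toFinset.erase e) xh (2/K)
          (fun e' he' => le_of_lt (hlt e' (List.mem_toFinset.1 (Finset.mem_of_mem_erase he'))))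
        rw [Finset.card_erase_of_mem hmem, hcard] at hb
        have hc1 : ((k - 1 : ℕ) : ℝ) = (k:ℝ) - 1 := by
          have : 1 ≤ k := by omega
          push_cast [this]; ring
        calc ∑ e' ∈ c.edges.toFinset.erase e, xh e' ≤ (k-1) • (2/K) := hb
          _ = ((k - 1 : ℕ) : ℝ) * (2/K) := by rw [nsmul_eq_mul]
          _ = ((k:ℝ) - 1) * (2/K) := by rw [hc1]
      have hsplit : xh e + ∑ e' ∈ c.edges.toFinset.erase e, xh e' =
          ∑ e' ∈ c.edges.toFinset, xh e' := Finset.add_sum_erase _ _ hmem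
      rw [div_le_iff₀ hKpos]
      have hge1 : 1 ≤ xh e + ((k:ℝ) - 1) * (2/K) := by linarith
      have hmul := mul_le_mul_of_nonneg_right hge1 hKpos.le
      have hexp : (xh e + ((k:ℝ) - 1) * (2/K)) * K = xh e * K + ((k:ℝ) - 1) * 2 := by
        field_simp
      have hK1 : ((k:ℝ) - 1) * 2 = K - 1 := by rw [hKdef]; ring
      linarith
    have hH : ∀ e ∈ c.edges, e ∈ H := fun e he =>
      Finset.mem_filter.2 ⟨hedge e he, hge e he, hlt e he⟩
    have hnd : ∀ e ∈ c.edges, ¬ (Sym2.map f e).IsDiag := by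
      intro e he hd
      exact hcon e he (Finset.mem_union_right _ (Finset.mem_filter.2 ⟨hH e he, hd⟩))
    have hpar := (walk_parity f c hnd).1 rfl
    rw [hlen] at hpar
    exact (Nat.not_even_iff_odd.2 hodd) hpar
  · -- weight bound
    have hdisj : Disjoint A₁ A₂ := by
      rw [Finset.disjoint_left]
      intro e he1 he2
      have h1 : 2/K ≤ xh e := (Finset.mem_filter.1 he1).2
      have h2 : xh e < 2/K := (Finset.mem_filter.1 (Finset.mem_of_mem_filter e he2)).2.2
      linarith
    rw [Finset.sum_union hdisj]
    have hA1 : ∑ e ∈ A₁, (w e : ℝ) ≤ (K/2) * ∑ e ∈ A₁, (w e : ℝ) * xh e := by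
      rw [Finset.mul_sum]
      refine Finset.sum_le_sum (fun e he => ?_)
      have hx : 2/K ≤ xh e := (Finset.mem_filter.1 he).2
      have hwe : (0:ℝ) < (w e : ℝ) := by
        exact_mod_cast hw e (SimpleGraph.mem_edgeFinset.1 (Finset.mem_of_mem_filter e he))
      have h2 : (1:ℝ) ≤ (K/2) * xh e := by
        have hm := mul_le_mul_of_nonneg_left hx (by linarith : (0:ℝ) ≤ K/2)
        have : (K/2) * (2/K) = 1 := by field_simp
        linarith
      nlinarith
    have hH2 : ∑ e ∈ H, (w e : ℝ) ≤ K * ∑ e ∈ H, (w e : ℝ) * xh e := by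
      rw [Finset.mul_sum]
      refine Finset.sum_le_sum (fun e he => ?_)
      have hx : 1/K ≤ xh e := (Finset.mem_filter.1 he).2.1
      have hwe : (0:ℝ) < (w e : ℝ) := by exact_mod_cast hw e (hHE e he)
      have h2 : (1:ℝ) ≤ K * xh e := by
        have hm := mul_le_mul_of_nonneg_left hx hKpos.le
        have : K * (1/K) = 1 := by field_simp
        linarith
      nlinarith
    have hA2 : ∑ e ∈ A₂, (w e : ℝ) ≤ (K/2) * ∑ e ∈ H, (w e : ℝ) * xh e := by
      calc ∑ e ∈ A₂, (w e : ℝ) ≤ (∑ e ∈ H, (w e : ℝ)) / 2 := hcut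
        _ ≤ (K * ∑ e ∈ H, (w e : ℝ) * xh e) / 2 := by
            linarith
        _ = (K/2) * ∑ e ∈ H, (w e : ℝ) * xh e := by ring
    have hdisj2 : Disjoint A₁ H := by
      rw [Finset.disjoint_left]
      intro e he1 he2
      have h1 : 2/K ≤ xh e := (Finset.mem_filter.1 he1).2
      have h2 : xh e < 2/K := (Finset.mem_filter.1 he2).2.2
      linarith
    have hsub : A₁ ∪ H ⊆ G.edgeFinset := by
      intro e he
      rcases Finset.mem_union.1 he with he | he
      · exact Finset.mem_of_mem_filter e he
      · exact Finset.mem_of_mem_filter e he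
    have hmono : ∑ e ∈ A₁, (w e : ℝ) * xh e + ∑ e ∈ H, (w e : ℝ) * xh e
        ≤ ∑ e ∈ G.edgeFinset, (w e : ℝ) * xh e := by
      rw [← Finset.sum_union hdisj2]
      refine Finset.sum_le_sum_of_subset_of_nonneg hsub (fun e he _ => ?_)
      have hwe : (0:ℝ) ≤ (w e : ℝ) := by
        exact_mod_cast (hw e (SimpleGraph.mem_edgeFinset.1 he)).le
      exact mul_nonneg hwe (hx0 e (SimpleGraph.mem_edgeFinset.1 he))
    have hkK : (k:ℝ) - 1/2 = K/2 := by rw [hKdef]; ring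
    rw [hkK]
    calc ∑ e ∈ A₁, (w e : ℝ) + ∑ e ∈ A₂, (w e : ℝ)
        ≤ (K/2) * ∑ e ∈ A₁, (w e : ℝ) * xh e + (K/2) * ∑ e ∈ H, (w e : ℝ) * xh e := by
          linarith
      _ = (K/2) * (∑ e ∈ A₁, (w e : ℝ) * xh e + ∑ e ∈ H, (w e : ℝ) * xh e) := by ring
      _ ≤ (K/2) * ∑ e ∈ G.edgeFinset, (w e : ℝ) * xh e := by
          exact mul_le_mul_of_nonneg_left hmono (by linarith : (0:ℝ) ≤ K/2)
end

section
/- Let G = (V,E) be a finite simple graph, let k ≥ 3 be an integer, let w : E → ℤ assign a positive integer weight to each edge, and let x̂ : E → ℝ satisfy 0 ≤ x̂(e) ≤ 1 for all e ∈ E and Σ_{e ∈ E(K)} x̂(e) ≥ 1 for every k-clique K of G. Then there exists a k-clique covering A ⊆ E of G with Σ_{e ∈ A} w(e) ≤ (C(k,2) − 1/2) · Σ_{e ∈ E} w(e)·x̂(e) = ((k² − k − 1)/2) · Σ_{e ∈ E} w(e)·x̂(e). In particular, the minimum weight τ̃_k(G_w) of a k-clique covering is at most (k² − k − 1)/2 times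 the optimal value of the fractional k-clique covering LP. -/
open Finset
open scoped Classical

/-- The edges of `G` spanned by the vertex set `s` (for a clique `s`, these are
the edges of the clique). -/
noncomputable def cliqueEdges {V : Type*} [Fintype V] [DecidableEq V]
    (G : SimpleGraph V) (s : Finset V) : Finset (Sym2 V) :=
  G.edgeFinset.filter (fun e => ∀ v ∈ e, v ∈ s)

private lemma cliqueEdges_mem {V : Type*} [Fintype V] [DecidableEq V]
    (G : SimpleGraph V) (s : Finset V) {e : Sym2 V} (he : e ∈ cliqueEdges G s) :
    e ∈ G.edgeSet ∧ ∀ v ∈ e, v ∈ s := by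
  unfold cliqueEdges at he
  rw [Finset.mem_filter, SimpleGraph.mem_edgeFinset] at he
  exact he

private lemma mem_cliqueEdges {V : Type*} [Fintype V] [DecidableEq V]
    (G : SimpleGraph V) (s : Finset V) {e : Sym2 V} (h1 : e ∈ G.edgeSet)
    (h2 : ∀ v ∈ e, v ∈ s) : e ∈ cliqueEdges G s := by
  unfold cliqueEdges
  rw [Finset.mem_filter, SimpleGraph.mem_edgeFinset]
  exact ⟨h1, h2⟩

/-- Separation predicate for a 2-coloring of vertices. -/
private def sepa {V : Type*} (f : V → Bool) : Sym2 V → Prop :=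
  Sym2.lift ⟨fun a b => f a ≠ f b, fun a b => propext ⟨Ne.symm, Ne.symm⟩⟩

private lemma sepa_mk {V : Type*} (f : V → Bool) (u v : V) :
    sepa f s(u, v) ↔ f u ≠ f v := Iff.rfl

/-- For a non-diagonal pair, exactly half of all 2-colorings separate it. -/
private lemma card_sepa_mul_two {V : Type*} [Fintype V] [DecidableEq V]
    {u v : V} (huv : u ≠ v) :
    (Finset.univ.filter fun f : V → Bool => sepa f s(u, v)).card * 2
      = Fintype.card (V → Bool) := by
  have hbij : (Finset.univ.filter fun f : V → Bool => sepa f s(u, v)).card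
      = (Finset.univ.filter fun f : V → Bool => ¬ sepa f s(u, v)).card := by
    apply Finset.card_nbij' (fun f => Function.update f u (!(f u)))
      (fun f => Function.update f u (!(f u)))
    · intro f hf
      simp only [Finset.mem_coe, Finset.mem_filter, Finset.mem_univ, true_and, sepa_mk] at hf ⊢
      rw [Function.update_self, Function.update_of_ne huv.symm]
      revert hf
      cases f u <;> cases f v <;> simp
    · intro f hf
      simp only [Finset.mem_coe, Finset.mem_filter, Finset.mem_univ, true_and, sepa_mk] at hf ⊢
      rw [Function.update_self, Function.update_of_ne huv.symm]
      revert hf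
      cases f u <;> cases f v <;> simp
    · intro f _
      funext x
      by_cases hx : x = u
      · subst hx
        simp [Function.update_self]
      · simp [Function.update_of_ne hx]
    · intro f _
      funext x
      by_cases hx : x = u
      · subst hx
        simp [Function.update_self]
      · simp [Function.update_of_ne hx]
  have hsum := Finset.card_filter_add_card_filter_not
    (s := (Finset.univ : Finset (V → Bool))) (fun f : V → Bool => sepa f s(u, v))
  rw [Finset.card_univ] at hsum
  omega

/-- Double counting: a set `s` spans at most `|s|·(|s|-1)/2` edges. -/
private lemma two_mul_card_cliqueEdges_le {V : Type*} [Fintype V] [DecidableEq V]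
    (G : SimpleGraph V) (s : Finset V) :
    2 * (cliqueEdges G s).card ≤ s.card * s.card - s.card := by
  classical
  set T : Finset (V × V) := s.offDiag.filter (fun p => Sym2.mk p.1 p.2 ∈ cliqueEdges G s) with hT
  have hfib : ∀ e ∈ cliqueEdges G s, 2 ≤ (T.filter fun p => Sym2.mk p.1 p.2 = e).card := by
    intro e he
    revert he
    induction e using Sym2.ind with
    | _ u v =>
      intro he
      have hmem : ∀ x ∈ s(u, v), x ∈ s := (cliqueEdges_mem G s he).2
      have hadj : G.Adj u v := (G.mem_edgeSet).mp (cliqueEdges_mem G s he).1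
      have huv : u ≠ v := hadj.ne
      have hsub : ({(u, v), (v, u)} : Finset (V × V)) ⊆
          T.filter fun p => Sym2.mk p.1 p.2 = s(u, v) := by
        intro p hp
        have hu : u ∈ s := hmem u (Sym2.mem_mk_left u v)
        have hv : v ∈ s := hmem v (Sym2.mem_mk_right u v)
        simp only [Finset.mem_insert, Finset.mem_singleton] at hp
        rcases hp with rfl | rfl <;>
          · rw [Finset.mem_filter, hT, Finset.mem_filter, Finset.mem_offDiag]
            refine ⟨⟨⟨by assumption, by assumption, by tauto⟩, ?_⟩, ?_⟩ <;>
              simp [Sym2.eq_swap, he]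
      have h2 : ({(u, v), (v, u)} : Finset (V × V)).card = 2 := by
        rw [Finset.card_pair]
        simp only [ne_eq, Prod.mk.injEq, not_and]
        intro h; exact absurd h huv
      calc 2 = ({(u, v), (v, u)} : Finset (V × V)).card := h2.symm
        _ ≤ _ := Finset.card_le_card hsub
  have hcount : T.card = ∑ e ∈ cliqueEdges G s, (T.filter fun p => Sym2.mk p.1 p.2 = e).card :=
    Finset.card_eq_sum_card_fiberwise (fun p hp => (Finset.mem_filter.mp hp).2)
  have h1 : 2 * (cliqueEdges G s).card ≤ T.card := by
    have hle := Finset.card_nsmul_le_sum (cliqueEdges G s)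
      (fun e => (T.filter fun p => Sym2.mk p.1 p.2 = e).card) 2 hfib
    rw [smul_eq_mul] at hle
    omega
  have h2 : T.card ≤ s.offDiag.card := Finset.card_le_card (Finset.filter_subset _ _)
  rw [Finset.offDiag_card] at h2
  omega

/-- from any fractional feasible solution `x̂` of the k-clique covering
LP one obtains a k-clique covering `A ⊆ E` of weight at most
`(C(k,2) - 1/2) · Σ w e * x̂ e = ((k² - k - 1)/2) · Σ w e * x̂ e`. In particular the
minimum weight of a k-clique covering is at most `(k² - k - 1)/2` times the LP
optimum. -/
theorem kCliqueCover_approx {V : Type*} [Fintype V] [DecidableEq V]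
    (G : SimpleGraph V) [DecidableRel G.Adj]
    (k : ℕ) (hk : 3 ≤ k)
    (w : Sym2 V → ℤ) (hw : ∀ e ∈ G.edgeSet, 0 < w e)
    (xh : Sym2 V → ℝ)
    (hx0 : ∀ e ∈ G.edgeSet, 0 ≤ xh e) (hx1 : ∀ e ∈ G.edgeSet, xh e ≤ 1)
    (hfeas : ∀ s : Finset V, G.IsNClique k s →
      1 ≤ ∑ e ∈ cliqueEdges G s, xh e) :
    ∃ A : Finset (Sym2 V), ↑A ⊆ G.edgeSet ∧
      (∀ s : Finset V, G.IsNClique k s → ∃ e ∈ cliqueEdges G s, e ∈ A) ∧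
      ∑ e ∈ A, (w e : ℝ) ≤
        (((k : ℝ) ^ 2 - k - 1) / 2) * ∑ e ∈ G.edgeFinset, (w e : ℝ) * xh e := by
  have hk3 : (3 : ℝ) ≤ (k : ℝ) := by exact_mod_cast hk
  set c : ℝ := ((k : ℝ) ^ 2 - k - 1) / 2 with hc_def
  have hc : 0 < c := by rw [hc_def]; nlinarith
  -- nonnegative weights on edges
  have hwnn : ∀ e ∈ G.edgeFinset, (0 : ℝ) ≤ (w e : ℝ) := by
    intro e he
    rw [SimpleGraph.mem_edgeFinset] at he
    exact_mod_cast (hw e he).le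
  set A1 : Finset (Sym2 V) := G.edgeFinset.filter (fun e => 1 ≤ c * xh e) with hA1
  set B : Finset (Sym2 V) :=
    G.edgeFinset.filter (fun e => 1 ≤ 2 * (c * xh e) ∧ ¬ (1 ≤ c * xh e)) with hB
  -- a good 2-coloring: the cut contains at least half the weight of B
  obtain ⟨f, hf⟩ : ∃ f : V → Bool,
      ∑ e ∈ B, (w e : ℝ) ≤ 2 * ∑ e ∈ B.filter (fun e => sepa f e), (w e : ℝ) := by
    by_contra hcon
    push_neg at hcon
    have hNE : Nonempty (V → Bool) := ⟨fun _ => true⟩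
    set N : ℕ := Fintype.card (V → Bool) with hN
    have hkey : ∀ e ∈ B,
        ((Finset.univ.filter fun f : V → Bool => sepa f e).card : ℝ) = (N : ℝ) / 2 := by
      intro e he
      have heE : e ∈ G.edgeSet := SimpleGraph.mem_edgeFinset.mp (Finset.mem_filter.mp he).1
      clear he
      revert heE
      induction e using Sym2.ind with
      | _ u v =>
        intro heE
        have hadj : G.Adj u v := (G.mem_edgeSet).mp heE
        have := card_sepa_mul_two (V := V) hadj.ne
        have : ((Finset.univ.filter fun f : V → Bool => sepa f s(u, v)).card : ℝ) * 2
            = (N : ℝ) := by exact_mod_cast congrArg Nat.cast this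
        linarith
    have hS : ∑ f : V → Bool, ∑ e ∈ B.filter (fun e => sepa f e), (w e : ℝ)
        = (N : ℝ) / 2 * ∑ e ∈ B, (w e : ℝ) := by
      have h1 : ∀ f : V → Bool, ∑ e ∈ B.filter (fun e => sepa f e), (w e : ℝ)
          = ∑ e ∈ B, if sepa f e then (w e : ℝ) else 0 := by
        intro f; rw [Finset.sum_filter]
      calc ∑ f : V → Bool, ∑ e ∈ B.filter (fun e => sepa f e), (w e : ℝ)
          = ∑ f : V → Bool, ∑ e ∈ B, if sepa f e then (w e : ℝ) else 0 := by
            exact Finset.sum_congr rfl fun f _ => h1 f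
        _ = ∑ e ∈ B, ∑ f : V → Bool, if sepa f e then (w e : ℝ) else 0 :=
            Finset.sum_comm
        _ = ∑ e ∈ B, ((Finset.univ.filter fun f : V → Bool => sepa f e).card : ℝ) * (w e : ℝ) := by
            refine Finset.sum_congr rfl fun e _ => ?_
            rw [← Finset.sum_filter, Finset.sum_const, nsmul_eq_mul]
        _ = ∑ e ∈ B, (N : ℝ) / 2 * (w e : ℝ) :=
            Finset.sum_congr rfl fun e he => by rw [hkey e he]
        _ = (N : ℝ) / 2 * ∑ e ∈ B, (w e : ℝ) := by rw [Finset.mul_sum]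
    have hlt : ∑ f : V → Bool, ∑ e ∈ B.filter (fun e => sepa f e), (w e : ℝ)
        < ∑ _f : V → Bool, (∑ e ∈ B, (w e : ℝ)) / 2 := by
      apply Finset.sum_lt_sum_of_nonempty Finset.univ_nonempty
      intro f _
      have := hcon f
      linarith
    rw [hS, Finset.sum_const, Finset.card_univ, nsmul_eq_mul, ← hN] at hlt
    have : (N : ℝ) / 2 * ∑ e ∈ B, (w e : ℝ) = (N : ℝ) * ((∑ e ∈ B, (w e : ℝ)) / 2) := by ring
    linarith [hlt, this.ge]
  set C : Finset (Sym2 V) := B.filter (fun e => ¬ sepa f e) with hC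
  have hA1sub : A1 ⊆ G.edgeFinset := Finset.filter_subset _ _
  have hBsub : B ⊆ G.edgeFinset := Finset.filter_subset _ _
  have hCsub : C ⊆ G.edgeFinset := fun e he => hBsub ((Finset.mem_filter.mp he).1)
  refine ⟨A1 ∪ C, ?_, ?_, ?_⟩
  · intro e he
    rw [Finset.mem_coe, Finset.mem_union] at he
    rcases he with he | he
    · exact (SimpleGraph.mem_edgeFinset).mp (hA1sub he)
    · exact (SimpleGraph.mem_edgeFinset).mp (hCsub he)
  · -- covering property
    intro s hs
    by_cases hA : ∃ e ∈ cliqueEdges G s, e ∈ A1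
    · obtain ⟨e, he, heA⟩ := hA
      exact ⟨e, he, Finset.mem_union_left _ heA⟩
    push_neg at hA
    have hCEsub : ∀ e ∈ cliqueEdges G s, e ∈ G.edgeFinset := fun e he =>
      SimpleGraph.mem_edgeFinset.mpr (cliqueEdges_mem G s he).1
    have hsmall : ∀ e ∈ cliqueEdges G s, ¬ (1 ≤ c * xh e) := by
      intro e he hge
      exact hA e he (Finset.mem_filter.mpr ⟨hCEsub e he, hge⟩)
    -- every edge of the clique is in the band
    have hband : ∀ e ∈ cliqueEdges G s, 1 ≤ 2 * (c * xh e) := by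
      by_contra hconb
      push_neg at hconb
      obtain ⟨e1, he1, he1lt⟩ := hconb
      -- bound on the number of clique edges
      have hcardN : 2 * (cliqueEdges G s).card ≤ k * k - k := by
        have := two_mul_card_cliqueEdges_le G s
        rwa [hs.card_eq] at this
      have hkk : k ≤ k * k := Nat.le_mul_of_pos_left k (by omega)
      have hcardR : 2 * ((cliqueEdges G s).card : ℝ) ≤ (k : ℝ) * k - k := by
        have h2 : ((2 * (cliqueEdges G s).card : ℕ) : ℝ) ≤ ((k * k - k : ℕ) : ℝ) := by
          exact_mod_cast hcardN
        rw [Nat.cast_sub hkk] at h2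
        push_cast at h2
        linarith
      have hlt : ∑ e ∈ cliqueEdges G s, xh e
          < ∑ e ∈ cliqueEdges G s, (if e = e1 then 1 / (2 * c) else 1 / c) := by
        apply Finset.sum_lt_sum_of_nonempty ⟨e1, he1⟩
        intro e he
        by_cases heq : e = e1
        · rw [if_pos heq, lt_div_iff₀ (by linarith : (0:ℝ) < 2 * c), heq]
          nlinarith
        · rw [if_neg heq, lt_div_iff₀ hc]
          have hlt1 : c * xh e < 1 := not_le.mp (hsmall e he)
          nlinarith
      have hsplit : ∑ e ∈ cliqueEdges G s, (if e = e1 then 1 / (2 * c) else 1 / c)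
          = 1 / (2 * c) + (((cliqueEdges G s).card - 1 : ℕ) : ℝ) * (1 / c) := by
        have herase : ∑ e ∈ (cliqueEdges G s).erase e1,
            (if e = e1 then 1 / (2 * c) else 1 / c)
            = (((cliqueEdges G s).card - 1 : ℕ) : ℝ) * (1 / c) := by
          rw [Finset.sum_congr rfl (fun e he => if_neg (Finset.ne_of_mem_erase he)),
            Finset.sum_const, Finset.card_erase_of_mem he1, nsmul_eq_mul]
        conv_lhs => rw [← Finset.insert_erase he1]
        rw [Finset.sum_insert (Finset.notMem_erase _ _), if_pos rfl, herase]
      have hcard1 : 1 ≤ (cliqueEdges G s).card := Finset.card_pos.mpr ⟨e1, he1⟩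
      have hcast : (((cliqueEdges G s).card - 1 : ℕ) : ℝ)
          = ((cliqueEdges G s).card : ℝ) - 1 := by
        rw [Nat.cast_sub hcard1, Nat.cast_one]
      have hle1 : ∑ e ∈ cliqueEdges G s, (if e = e1 then 1 / (2 * c) else 1 / c) ≤ 1 := by
        rw [hsplit, hcast]
        have h2c : (k : ℝ) * k - k = 2 * c + 1 := by rw [hc_def]; ring
        rw [h2c] at hcardR
        have hn : ((cliqueEdges G s).card : ℝ) - 1 ≤ c - 1 / 2 := by linarith
        have : (((cliqueEdges G s).card : ℝ) - 1) * (1 / c) ≤ (c - 1 / 2) * (1 / c) := by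
          apply mul_le_mul_of_nonneg_right hn
          positivity
        have hexp : (c - 1 / 2) * (1 / c) = 1 - 1 / (2 * c) := by
          field_simp
        rw [hexp] at this
        linarith
      have := hfeas s hs
      linarith
    -- pigeonhole: two vertices of the clique with the same color
    have hcard2 : (Finset.univ : Finset Bool).card < s.card := by
      rw [Finset.card_univ, Fintype.card_bool, hs.card_eq]
      omega
    obtain ⟨u, hu, v, hv, huv, hfuv⟩ :=
      Finset.exists_ne_map_eq_of_card_lt_of_maps_to hcard2 (fun a _ => Finset.mem_univ (f a))
    have hadj : G.Adj u v := hs.isClique hu hv huv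
    have heCE : s(u, v) ∈ cliqueEdges G s := by
      apply mem_cliqueEdges G s ((G.mem_edgeSet).mpr hadj)
      intro x hx
      rcases Sym2.mem_iff.mp hx with rfl | rfl <;> assumption
    refine ⟨s(u, v), heCE, Finset.mem_union_right _ ?_⟩
    rw [hC, Finset.mem_filter]
    refine ⟨?_, ?_⟩
    · rw [hB, Finset.mem_filter]
      exact ⟨hCEsub _ heCE, hband _ heCE, hsmall _ heCE⟩
    · rw [sepa_mk]
      simp [hfuv]
  · -- weight bound
    have hdisj : Disjoint A1 C := by
      rw [Finset.disjoint_left]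
      intro e heA heC
      have h1 := (Finset.mem_filter.mp heA).2
      have h2 := (Finset.mem_filter.mp ((Finset.mem_filter.mp heC).1)).2.2
      exact h2 h1
    rw [Finset.sum_union hdisj]
    have h1 : ∑ e ∈ A1, (w e : ℝ) ≤ ∑ e ∈ A1, c * ((w e : ℝ) * xh e) := by
      apply Finset.sum_le_sum
      intro e he
      have hge := (Finset.mem_filter.mp he).2
      have hwn := hwnn e (hA1sub he)
      nlinarith
    have h2 : ∑ e ∈ C, (w e : ℝ) ≤ ∑ e ∈ B, c * ((w e : ℝ) * xh e) := by
      have hpart : ∑ e ∈ B.filter (fun e => sepa f e), (w e : ℝ)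
          + ∑ e ∈ B.filter (fun e => ¬ sepa f e), (w e : ℝ) = ∑ e ∈ B, (w e : ℝ) :=
        Finset.sum_filter_add_sum_filter_not B _ _
      have hhalf : ∑ e ∈ C, (w e : ℝ) ≤ (∑ e ∈ B, (w e : ℝ)) / 2 := by
        rw [hC]
        linarith
      have hB2 : (∑ e ∈ B, (w e : ℝ)) / 2 ≤ ∑ e ∈ B, c * ((w e : ℝ) * xh e) := by
        rw [Finset.sum_div]
        apply Finset.sum_le_sum
        intro e he
        have hge := (Finset.mem_filter.mp he).2.1
        have hwn := hwnn e (hBsub he)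
        nlinarith
      linarith
    have hsub : A1 ∪ B ⊆ G.edgeFinset := Finset.union_subset hA1sub hBsub
    have hdisj2 : Disjoint A1 B := by
      rw [Finset.disjoint_left]
      intro e heA heB
      exact (Finset.mem_filter.mp heB).2.2 (Finset.mem_filter.mp heA).2
    have h3 : ∑ e ∈ A1, c * ((w e : ℝ) * xh e) + ∑ e ∈ B, c * ((w e : ℝ) * xh e)
        ≤ ∑ e ∈ G.edgeFinset, c * ((w e : ℝ) * xh e) := by
      rw [← Finset.sum_union hdisj2]
      apply Finset.sum_le_sum_of_subset_of_nonneg hsub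
      intro e he _
      have hwn := hwnn e he
      have hxn := hx0 e (SimpleGraph.mem_edgeFinset.mp he)
      positivity
    have h4 : ∑ e ∈ G.edgeFinset, c * ((w e : ℝ) * xh e)
        = c * ∑ e ∈ G.edgeFinset, (w e : ℝ) * xh e := by
      rw [Finset.mul_sum]
    linarith
end

section
/- Let k ≥ 4 be an even integer. Then lim_{n→∞} τ_k(K_n) / C(n,2) = 1, where τ_k(K_n) is the minimum number of edges whose deletion from the complete graph K_n leaves a graph with no k-cycle and C(n,2) = n(n−1)/2. Equivalently, for every ε > 0 there exists N such that for all n ≥ N, τ_k(K_n) ≥ (1 − ε)·C(n,2). -/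
open Finset
open scoped Classical

section zig
variable {V : Type*} {G : SimpleGraph V} {t : ℕ} {a b : ℕ → V}

lemma zigzag (hab : ∀ i j, G.Adj (a i) (b j))
    (ha : ∀ i j, i < t → j < t → a i = a j → i = j)
    (hb : ∀ i j, i < t → j < t → b i = b j → i = j) :
    ∀ m i l, l = i + m → i + m < t → ∃ p : G.Walk (a i) (b l), p.IsPath ∧ p.length = 2 * m + 1 ∧
      (∀ x ∈ p.support, ∃ j, i ≤ j ∧ j ≤ i + m ∧ (x = a j ∨ x = b j)) ∧
      (∀ e ∈ p.edges, (∃ j, i ≤ j ∧ j ≤ i + m ∧ e = s(a j, b j)) ∨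
        (∃ j, i ≤ j ∧ j + 1 ≤ i + m ∧ e = s(b j, a (j + 1)))) := by
  intro m
  induction m with
  | zero =>
    intro i l hl hi
    obtain rfl : i = l := by omega
    refine ⟨SimpleGraph.Walk.cons (hab i i) SimpleGraph.Walk.nil, ?_, ?_, ?_, ?_⟩
    · simp [SimpleGraph.Walk.isPath_def, (hab i i).ne]
    · simp
    · intro x hx
      simp only [SimpleGraph.Walk.support_cons, SimpleGraph.Walk.support_nil,
        List.mem_cons, List.mem_singleton] at hx
      rcases hx with h | h | h
      · exact ⟨i, le_refl i, by omega, Or.inl h⟩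
      · exact ⟨i, le_refl i, by omega, Or.inr h⟩
      · exact absurd h List.not_mem_nil
    · intro e he
      simp only [SimpleGraph.Walk.edges_cons, SimpleGraph.Walk.edges_nil,
        List.mem_singleton] at he
      exact Or.inl ⟨i, le_refl i, by omega, he⟩
  | succ m ih =>
    intro i l hl hi
    obtain ⟨p, hp, hlen, hsup, hed⟩ := ih (i + 1) l (by omega) (by omega)
    have hba : G.Adj (b i) (a (i + 1)) := (hab (i + 1) i).symm
    have hbns : b i ∉ p.support := by
      intro hmem
      obtain ⟨j, hj1, hj2, hj3⟩ := hsup _ hmem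
      rcases hj3 with h | h
      · exact (hab j i).ne' h
      · have := hb i j (by omega) (by omega) h
        omega
    have hans : a i ∉ (SimpleGraph.Walk.cons hba p).support := by
      rw [SimpleGraph.Walk.support_cons]
      intro hmem
      rcases List.mem_cons.mp hmem with h | hmem
      · exact (hab i i).ne (h.trans rfl ▸ h)
      · obtain ⟨j, hj1, hj2, hj3⟩ := hsup _ hmem
        rcases hj3 with h | h
        · have := ha i j (by omega) (by omega) h
          omega
        · exact (hab i j).ne h
    refine ⟨SimpleGraph.Walk.cons (hab i i) (SimpleGraph.Walk.cons hba p), ?_, ?_, ?_, ?_⟩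
    · exact ((hp.cons hbns).cons hans)
    · simp [hlen]; omega
    · intro x hx
      simp only [SimpleGraph.Walk.support_cons, List.mem_cons] at hx
      rcases hx with h | h | hmem
      · exact ⟨i, le_refl i, by omega, Or.inl h⟩
      · exact ⟨i, le_refl i, by omega, Or.inr h⟩
      · obtain ⟨j, hj1, hj2, hj3⟩ := hsup _ hmem
        exact ⟨j, by omega, by omega, hj3⟩
    · intro e he
      simp only [SimpleGraph.Walk.edges_cons, List.mem_cons] at he
      rcases he with h | h | hmem
      · exact Or.inl ⟨i, le_refl i, by omega, h⟩
      · exact Or.inr ⟨i, le_refl i, by omega, h⟩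
      · rcases hed _ hmem with ⟨j, hj1, hj2, hj3⟩ | ⟨j, hj1, hj2, hj3⟩
        · exact Or.inl ⟨j, by omega, by omega, hj3⟩
        · exact Or.inr ⟨j, by omega, by omega, hj3⟩

lemma exists_cycle_of_zig (ht : 2 ≤ t) (hab : ∀ i j, G.Adj (a i) (b j))
    (ha : ∀ i j, i < t → j < t → a i = a j → i = j)
    (hb : ∀ i j, i < t → j < t → b i = b j → i = j) :
    ∃ (u : V) (c : G.Walk u u), c.IsCycle ∧ c.length = 2 * t := by
  obtain ⟨p, hp, hlen, hsup, hed⟩ := zigzag hab ha hb (t - 1) 0 (t - 1) (by omega) (by omega)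
  have hadj : G.Adj (b (t - 1)) (a 0) := (hab 0 (t - 1)).symm
  refine ⟨b (t - 1), SimpleGraph.Walk.cons hadj p, ?_, ?_⟩
  · rw [SimpleGraph.Walk.cons_isCycle_iff]
    refine ⟨hp, ?_⟩
    intro hmem
    rcases hed _ hmem with ⟨j, hj1, hj2, hj3⟩ | ⟨j, hj1, hj2, hj3⟩
    · rw [Sym2.eq_iff] at hj3
      rcases hj3 with ⟨h1, h2⟩ | ⟨h1, h2⟩
      · exact (hab j (t-1)).ne h1.symm
      · have := hb (t-1) j (by omega) (by omega) h1
        have := ha 0 j (by omega) (by omega) h2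
        omega
    · rw [Sym2.eq_iff] at hj3
      rcases hj3 with ⟨h1, h2⟩ | ⟨h1, h2⟩
      · have := hb (t-1) j (by omega) (by omega) h1
        have := ha 0 (j+1) (by omega) (by omega) h2
        omega
      · exact (hab (j+1) (t-1)).ne h1.symm
  · simp [hlen]; omega

lemma kst {n t : ℕ} (ht : 1 ≤ t) (G : SimpleGraph (Fin n))
    (hlt : (t - 1) * n.choose t < ∑ v : Fin n, (G.degree v).choose t) :
    ∃ S T : Finset (Fin n), S.card = t ∧ T.card = t ∧
      ∀ s ∈ S, ∀ u ∈ T, G.Adj u s := by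
  have key : ∑ v : Fin n, (G.degree v).choose t =
      ∑ S ∈ (univ : Finset (Fin n)).powersetCard t,
        ((univ : Finset (Fin n)).filter (fun v => S ⊆ G.neighborFinset v)).card := by
    have h1 : ∀ v : Fin n, (G.degree v).choose t =
        (((univ : Finset (Fin n)).powersetCard t).filter
          (fun S => S ⊆ G.neighborFinset v)).card := by
      intro v
      rw [SimpleGraph.degree, ← Finset.card_powersetCard]
      congr 1
      ext S
      simp only [Finset.mem_powersetCard, Finset.mem_filter, Finset.subset_univ,
        true_and]
      tauto
    simp_rw [h1, Finset.card_filter]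
    exact Finset.sum_comm
  have hex : ∃ S ∈ (univ : Finset (Fin n)).powersetCard t,
      t ≤ ((univ : Finset (Fin n)).filter (fun v => S ⊆ G.neighborFinset v)).card := by
    by_contra hno
    push_neg at hno
    have hbd : ∑ S ∈ (univ : Finset (Fin n)).powersetCard t,
        ((univ : Finset (Fin n)).filter (fun v => S ⊆ G.neighborFinset v)).card ≤
        ((univ : Finset (Fin n)).powersetCard t).card * (t - 1) := by
      apply Finset.sum_le_card_nsmul
      intro S hS
      have := hno S hS
      omega
    rw [Finset.card_powersetCard, Finset.card_univ, Fintype.card_fin] at hbd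
    rw [key] at hlt
    rw [Nat.mul_comm] at hbd
    omega
  obtain ⟨S, hS, hcard⟩ := hex
  obtain ⟨T, hT, hTcard⟩ := Finset.exists_subset_card_eq hcard
  refine ⟨S, T, (Finset.mem_powersetCard.mp hS).2, hTcard, ?_⟩
  intro s hs u hu
  have := hT hu
  rw [Finset.mem_filter] at this
  exact (SimpleGraph.mem_neighborFinset _ _ _).mp (this.2 hs)

lemma core (t : ℕ) (ht : 2 ≤ t) (ε : ℝ) (hε : 0 < ε) :
    ∀ᶠ n : ℕ in Filter.atTop, ∀ G : SimpleGraph (Fin n),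
      ε * (n : ℝ) ^ 2 ≤ ∑ v : Fin n, (G.degree v : ℝ) →
      ∃ (u : Fin n) (c : G.Walk u u), c.IsCycle ∧ c.length = 2 * t := by
  have hcast : Filter.Tendsto (fun n : ℕ => (n : ℝ)) Filter.atTop Filter.atTop :=
    tendsto_natCast_atTop_atTop
  have h1 : ∀ᶠ n : ℕ in Filter.atTop, (t : ℝ) ≤ ε * (n : ℝ) / 4 := by
    have : Filter.Tendsto (fun n : ℕ => ε * (n : ℝ) / 4) Filter.atTop Filter.atTop := by
      apply Filter.Tendsto.atTop_div_const (by norm_num)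
      exact Filter.Tendsto.const_mul_atTop hε hcast
    exact this.eventually_ge_atTop _
  have h2 : ∀ᶠ n : ℕ in Filter.atTop, (1 : ℝ) ≤ ε * (n : ℝ) / 4 := by
    have : Filter.Tendsto (fun n : ℕ => ε * (n : ℝ) / 4) Filter.atTop Filter.atTop := by
      apply Filter.Tendsto.atTop_div_const (by norm_num)
      exact Filter.Tendsto.const_mul_atTop hε hcast
    exact this.eventually_ge_atTop _
  have h3 : ∀ᶠ n : ℕ in Filter.atTop, ((t : ℝ) - 1) < (ε / 4) ^ (t + 1) * (n : ℝ) := by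
    have : Filter.Tendsto (fun n : ℕ => (ε / 4) ^ (t + 1) * (n : ℝ)) Filter.atTop
        Filter.atTop := Filter.Tendsto.const_mul_atTop (by positivity) hcast
    exact this.eventually_gt_atTop _
  have h4 : ∀ᶠ n : ℕ in Filter.atTop, 1 ≤ n := Filter.eventually_ge_atTop 1
  filter_upwards [h1, h2, h3, h4] with n E1 E2 E3 E4 G hE
  have hn0 : (0 : ℝ) < (n : ℝ) := by exact_mod_cast E4
  set D : ℕ := ⌈ε * (n : ℝ) / 2⌉₊ with hDdef
  set W : Finset (Fin n) := univ.filter (fun v => D ≤ G.degree v) with hWdef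
  have hdegle : ∀ v : Fin n, G.degree v ≤ n := by
    intro v
    have h := Finset.card_le_univ (G.neighborFinset v)
    simpa using h
  -- Claim A
  have claimA : ∑ v : Fin n, G.degree v ≤ W.card * n + n * D := by
    have hA1 : ∑ v ∈ W, G.degree v ≤ W.card * n :=
      Finset.sum_le_card_nsmul _ _ _ (fun v _ => hdegle v)
    have hA2 : ∑ v ∈ univ.filter (fun v => ¬ D ≤ G.degree v), G.degree v ≤ n * D := by
      calc ∑ v ∈ univ.filter (fun v => ¬ D ≤ G.degree v), G.degree v
          ≤ (univ.filter (fun v => ¬ D ≤ G.degree v)).card * D :=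
            Finset.sum_le_card_nsmul _ _ _ (fun v hv => by
              simp only [Finset.mem_filter] at hv; omega)
        _ ≤ n * D := by
            apply Nat.mul_le_mul_right
            have h := Finset.card_le_univ (univ.filter (fun v : Fin n => ¬ D ≤ G.degree v))
            simpa using h
    calc ∑ v : Fin n, G.degree v
        = (∑ v ∈ univ.filter (fun v => D ≤ G.degree v), G.degree v) +
          ∑ v ∈ univ.filter (fun v => ¬ D ≤ G.degree v), G.degree v :=
          (Finset.sum_filter_add_sum_filter_not univ _ _).symm
      _ ≤ W.card * n + n * D := Nat.add_le_add hA1 hA2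
  have hD1 : (D : ℝ) < ε * (n : ℝ) / 2 + 1 := Nat.ceil_lt_add_one (by positivity)
  have hD2 : ε * (n : ℝ) / 2 ≤ (D : ℝ) := Nat.le_ceil _
  have hA' : (∑ v : Fin n, (G.degree v : ℝ)) ≤ (W.card : ℝ) * n + (n : ℝ) * D := by
    exact_mod_cast Nat.cast_le.mpr claimA
  have hW : ε * (n : ℝ) / 4 ≤ (W.card : ℝ) := by
    have h := hE.trans hA'
    nlinarith [hn0, E2]
  -- degrees in W are at least D
  have hsumchoose : W.card * D.choose t ≤ ∑ v : Fin n, (G.degree v).choose t := by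
    calc W.card * D.choose t = W.card • D.choose t := by rw [smul_eq_mul]
      _ ≤ ∑ v ∈ W, (G.degree v).choose t := by
          apply Finset.card_nsmul_le_sum
          intro v hv
          simp only [hWdef, Finset.mem_filter] at hv
          exact Nat.choose_le_choose t hv.2
      _ ≤ ∑ v : Fin n, (G.degree v).choose t :=
          Finset.sum_le_sum_of_subset (Finset.filter_subset _ _)
  -- real bounds on binomials
  have ht1 : (1 : ℕ) ≤ t := by omega
  have htfac : (0 : ℝ) < (t.factorial : ℝ) := by exact_mod_cast t.factorial_pos
  have hupper : (t.factorial : ℝ) * (n.choose t : ℝ) ≤ (n : ℝ) ^ t := by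
    have := Nat.descFactorial_le_pow n t
    rw [Nat.descFactorial_eq_factorial_mul_choose] at this
    exact_mod_cast this
  have hDt : (t : ℝ) ≤ (D : ℝ) := by nlinarith [E1, hD2]
  have hlower : (ε * (n : ℝ) / 4) ^ t ≤ (t.factorial : ℝ) * (D.choose t : ℝ) := by
    have h5 := Nat.pow_sub_le_descFactorial D t
    rw [Nat.descFactorial_eq_factorial_mul_choose] at h5
    have h6 : (((D + 1 - t) ^ t : ℕ) : ℝ) ≤ (t.factorial : ℝ) * (D.choose t : ℝ) := by
      exact_mod_cast h5
    refine le_trans ?_ h6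
    have h7 : ((D + 1 - t : ℕ) : ℝ) = (D : ℝ) + 1 - t := by
      have hDt' : t ≤ D := by exact_mod_cast hDt
      have : t ≤ D + 1 := by omega
      push_cast [Nat.cast_sub this]
      ring
    push_cast [h7]
    apply pow_le_pow_left₀ (by positivity)
    nlinarith [hD2, E1]
  -- combine
  have hkey : (t - 1) * n.choose t < ∑ v : Fin n, (G.degree v).choose t := by
    have hreal : ((t - 1 : ℕ) : ℝ) * (n.choose t : ℝ) < (W.card : ℝ) * (D.choose t : ℝ) := by
      have hc1 : ((t - 1 : ℕ) : ℝ) = (t : ℝ) - 1 := by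
        push_cast [Nat.cast_sub ht1]; ring
      rw [hc1]
      have hnt : (0 : ℝ) < (n : ℝ) ^ t := by positivity
      have hx : (ε * (n : ℝ) / 4) ^ (t + 1) = (ε / 4) ^ (t + 1) * (n : ℝ) ^ (t + 1) := by
        rw [← mul_pow]; ring_nf
      -- LHS * t! ≤ (t-1) n^t < (ε/4)^{t+1} n^{t+1} = (εn/4)^{t+1} ≤ (εn/4) * (t! * C(D,t)) ≤ t! * (W * C(D,t))
      rw [← mul_lt_mul_iff_right₀ htfac]
      calc (t.factorial : ℝ) * (((t : ℝ) - 1) * (n.choose t : ℝ))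
          = ((t : ℝ) - 1) * ((t.factorial : ℝ) * (n.choose t : ℝ)) := by ring
        _ ≤ ((t : ℝ) - 1) * (n : ℝ) ^ t := by
            apply mul_le_mul_of_nonneg_left hupper
            have : (1 : ℝ) ≤ (t : ℝ) := by exact_mod_cast ht1
            linarith
        _ < (ε / 4) ^ (t + 1) * (n : ℝ) ^ (t + 1) := by
            rw [pow_succ]
            calc ((t : ℝ) - 1) * (n : ℝ) ^ t
                < ((ε / 4) ^ (t + 1) * (n : ℝ)) * (n : ℝ) ^ t := by
                  apply mul_lt_mul_of_pos_right E3 hnt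
              _ = (ε / 4) ^ (t + 1) * ((n : ℝ) ^ t * (n : ℝ)) := by ring
        _ = (ε * (n : ℝ) / 4) ^ (t + 1) := hx.symm
        _ = (ε * (n : ℝ) / 4) * (ε * (n : ℝ) / 4) ^ t := by rw [pow_succ]; ring
        _ ≤ (W.card : ℝ) * ((t.factorial : ℝ) * (D.choose t : ℝ)) := by
            apply mul_le_mul hW hlower (by positivity) (by positivity)
        _ = (t.factorial : ℝ) * ((W.card : ℝ) * (D.choose t : ℝ)) := by ring
    have : ((t - 1) * n.choose t : ℕ) < (W.card * D.choose t : ℕ) := by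
      exact_mod_cast hreal
    omega
  obtain ⟨S, T, hScard, hTcard, hadj⟩ := kst ht1 G hkey
  have ht0 : 0 < t := by omega
  set a : ℕ → Fin n := fun i => (S.orderIsoOfFin hScard ⟨i % t, Nat.mod_lt _ ht0⟩ : Fin n)
    with hadef
  set b : ℕ → Fin n := fun i => (T.orderIsoOfFin hTcard ⟨i % t, Nat.mod_lt _ ht0⟩ : Fin n)
    with hbdef
  have haS : ∀ i, a i ∈ S := fun i => (S.orderIsoOfFin hScard _).2
  have hbT : ∀ i, b i ∈ T := fun i => (T.orderIsoOfFin hTcard _).2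
  have hab : ∀ i j, G.Adj (a i) (b j) := fun i j => (hadj _ (haS i) _ (hbT j)).symm
  have hainj : ∀ i j, i < t → j < t → a i = a j → i = j := by
    intro i j hi hj hij
    have := Subtype.ext hij
    have h9 := (S.orderIsoOfFin hScard).injective this
    have : i % t = j % t := by simpa [Fin.ext_iff] using h9
    rwa [Nat.mod_eq_of_lt hi, Nat.mod_eq_of_lt hj] at this
  have hbinj : ∀ i j, i < t → j < t → b i = b j → i = j := by
    intro i j hi hj hij
    have := Subtype.ext hij
    have h9 := (T.orderIsoOfFin hTcard).injective this
    have : i % t = j % t := by simpa [Fin.ext_iff] using h9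
    rwa [Nat.mod_eq_of_lt hi, Nat.mod_eq_of_lt hj] at this
  exact exists_cycle_of_zig ht hab hainj hbinj

/-- `τ_k(K_n)`: the minimum number of edges whose deletion from the complete graph
on `n` vertices leaves a graph containing no k-cycle. -/
noncomputable def tauCycleComplete (k n : ℕ) : ℕ :=
  sInf {m | ∃ A : Finset (Sym2 (Fin n)),
    ↑A ⊆ (⊤ : SimpleGraph (Fin n)).edgeSet ∧ A.card = m ∧
    ∀ (u : Fin n) (c : ((⊤ : SimpleGraph (Fin n)).deleteEdges ↑A).Walk u u),
      c.IsCycle → c.length ≠ k}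

lemma tau_mem (k n : ℕ) (hk : 1 ≤ k) :
    n.choose 2 ∈ {m | ∃ A : Finset (Sym2 (Fin n)),
      ↑A ⊆ (⊤ : SimpleGraph (Fin n)).edgeSet ∧ A.card = m ∧
      ∀ (u : Fin n) (c : ((⊤ : SimpleGraph (Fin n)).deleteEdges ↑A).Walk u u),
        c.IsCycle → c.length ≠ k} := by
  refine ⟨(⊤ : SimpleGraph (Fin n)).edgeFinset, ?_, ?_, ?_⟩
  · rw [SimpleGraph.coe_edgeFinset]
  · rw [SimpleGraph.card_edgeFinset_top_eq_card_choose_two, Fintype.card_fin]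
  · intro u c hc hlen
    have hnoadj : ∀ x y : Fin n,
        ¬ ((⊤ : SimpleGraph (Fin n)).deleteEdges
          ↑(⊤ : SimpleGraph (Fin n)).edgeFinset).Adj x y := by
      intro x y hxy
      rw [SimpleGraph.deleteEdges_adj, SimpleGraph.coe_edgeFinset] at hxy
      exact hxy.2 ((SimpleGraph.mem_edgeSet _).mpr hxy.1)
    cases c with
    | nil => simp at hlen; omega
    | cons h p => exact hnoadj _ _ h

lemma tau_lower (k : ℕ) (hk : 4 ≤ k) (heven : Even k) (ε : ℝ) (hε : 0 < ε) :
    ∀ᶠ n : ℕ in Filter.atTop,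
      (1 - ε) * (n.choose 2 : ℝ) ≤ (tauCycleComplete k n : ℝ) := by
  obtain ⟨t, rfl⟩ : ∃ t, k = 2 * t := by
    obtain ⟨r, hr⟩ := heven; exact ⟨r, by omega⟩
  have ht : 2 ≤ t := by omega
  filter_upwards [core t ht (ε / 2) (by positivity), Filter.eventually_ge_atTop 2]
    with n hcore hn2
  by_contra hcon
  push_neg at hcon
  have hne : {m | ∃ A : Finset (Sym2 (Fin n)),
      ↑A ⊆ (⊤ : SimpleGraph (Fin n)).edgeSet ∧ A.card = m ∧
      ∀ (u : Fin n) (c : ((⊤ : SimpleGraph (Fin n)).deleteEdges ↑A).Walk u u),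
        c.IsCycle → c.length ≠ 2 * t}.Nonempty :=
    ⟨n.choose 2, tau_mem (2 * t) n (by omega)⟩
  obtain ⟨A, hAsub, hAcard, hAnoc⟩ := Nat.sInf_mem hne
  set G := (⊤ : SimpleGraph (Fin n)).deleteEdges ↑A with hGdef
  -- edge count of G
  have hAfin : A ⊆ (⊤ : SimpleGraph (Fin n)).edgeFinset := by
    intro e he
    rw [SimpleGraph.mem_edgeFinset]
    exact hAsub he
  have hGedge : G.edgeFinset = (⊤ : SimpleGraph (Fin n)).edgeFinset \ A := by
    ext e
    simp only [SimpleGraph.mem_edgeFinset, hGdef, SimpleGraph.edgeSet_deleteEdges,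
      Set.mem_diff, Finset.mem_sdiff, Finset.mem_coe]
  have hGcard : G.edgeFinset.card = n.choose 2 - A.card := by
    rw [hGedge, Finset.card_sdiff_of_subset hAfin, SimpleGraph.card_edgeFinset_top_eq_card_choose_two,
      Fintype.card_fin]
  have hAle : A.card ≤ n.choose 2 := by
    have := Finset.card_le_card hAfin
    rwa [SimpleGraph.card_edgeFinset_top_eq_card_choose_two, Fintype.card_fin] at this
  have hsumdeg : ∑ v : Fin n, G.degree v = 2 * (n.choose 2 - A.card) := by
    rw [SimpleGraph.sum_degrees_eq_twice_card_edges, hGcard]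
  -- real estimates
  have hC : ((n.choose 2 : ℕ) : ℝ) = (n : ℝ) * ((n : ℝ) - 1) / 2 := Nat.cast_choose_two (K := ℝ) n
  have hn2' : (2 : ℝ) ≤ (n : ℝ) := by exact_mod_cast hn2
  have htau : (A.card : ℝ) < (1 - ε) * (n.choose 2 : ℝ) := by
    rw [hAcard]; exact hcon
  have hE : (ε / 2) * (n : ℝ) ^ 2 ≤ ∑ v : Fin n, (G.degree v : ℝ) := by
    have hsum' : (∑ v : Fin n, (G.degree v : ℝ)) = 2 * ((n.choose 2 : ℝ) - A.card) := by
      have := congrArg (fun x : ℕ => (x : ℝ)) hsumdeg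
      push_cast [Nat.cast_sub hAle] at this
      simpa using this
    rw [hsum']
    have hq : (0:ℝ) ≤ (n:ℝ) * ((n:ℝ) - 1) - (n:ℝ)^2 / 2 := by nlinarith [hn2']
    have h2C : 2 * ((n.choose 2 : ℕ) : ℝ) = (n:ℝ) * ((n:ℝ) - 1) := by rw [hC]; ring
    have hεq : ε * ((n:ℝ) * ((n:ℝ) - 1)) ≥ ε * (n:ℝ)^2 / 2 := by
      nlinarith [mul_nonneg hε.le hq]
    nlinarith [htau, h2C, hεq, mul_le_mul_of_nonneg_left (le_of_eq h2C) hε.le]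
  obtain ⟨u, c, hcyc, hlen⟩ := hcore G (by convert hE)
  exact hAnoc u c hcyc hlen

/-- for even `k ≥ 4`, `τ_k(K_n) / C(n,2) → 1` as `n → ∞`. -/
theorem tauCycleComplete_ratio_tendsto_one (k : ℕ) (hk : 4 ≤ k) (heven : Even k) :
    Filter.Tendsto (fun n : ℕ => (tauCycleComplete k n : ℝ) / (n.choose 2 : ℝ))
      Filter.atTop (nhds 1) := by
  rw [Metric.tendsto_atTop]
  intro ε hε
  have hlow := tau_lower k hk heven (ε / 2) (by positivity)
  rw [Filter.eventually_atTop] at hlow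
  obtain ⟨N1, hN1⟩ := hlow
  refine ⟨max N1 2, fun n hn => ?_⟩
  have hn1 : N1 ≤ n := le_trans (le_max_left _ _) hn
  have hn2 : 2 ≤ n := le_trans (le_max_right _ _) hn
  have hCpos : (0 : ℝ) < (n.choose 2 : ℝ) := by
    have : 0 < n.choose 2 := Nat.choose_pos hn2
    exact_mod_cast this
  have hupper : (tauCycleComplete k n : ℝ) ≤ (n.choose 2 : ℝ) := by
    have : tauCycleComplete k n ≤ n.choose 2 :=
      Nat.sInf_le (tau_mem k n (by omega))
    exact_mod_cast this
  have hlower := hN1 n hn1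
  rw [Real.dist_eq]
  have h1 : (tauCycleComplete k n : ℝ) / (n.choose 2 : ℝ) ≤ 1 :=
    div_le_one_of_le₀ hupper hCpos.le
  have h2 : 1 - ε / 2 ≤ (tauCycleComplete k n : ℝ) / (n.choose 2 : ℝ) := by
    rw [le_div_iff₀ hCpos]
    linarith [hlower]
  rw [abs_sub_lt_iff]
  constructor <;> linarith
end zig
end
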